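/- arXiv:1311.6788 — 2 statements merged into one kernel-verified Lean document; each statement's English description precedes it below -/
import Mathlib

section
/- Let A be a graded-commutative DGA over ℝ with Aᵏ = 0 for k < 0 and for k > n. Let d be its differential, h ∈ A a sum of homogeneous elements of odd degree with dh = 0, and b ∈ A a sum of homogeneous elements of positive even degree (hence b is nilpotent). Set h' = h + db. Then left multiplication by exp(b) = Σ_{m≥0} bᵐ/m! (a finite sum) is an invertible chain map of ℤ₂-graded complexes from (A, d_{h'}) to (A, d_h), with inverse left multiplication by exp(−b). Consequently it induces isomorphisms H^±(A, d_{h'}) ≅ H^±(A, d_h) of the even and odd twisted cohomology groups; i.e. the twisted cohomology depends only on the d-cohomology class of h. -/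
open LinearMap

/-- The (truncated, hence finite) exponential sum `exp b = Σ_{m=0}^{N} bᵐ/m!`.
When `b` is nilpotent with `b^m = 0` for `m > N`, this is the full exponential
`Σ_{m≥0} bᵐ/m!`. -/
noncomputable abbrev expSum {A : Type*} [Ring A] [Algebra ℝ A] (N : ℕ) (b : A) : A :=
  ∑ m ∈ Finset.range (N + 1), (m.factorial : ℝ)⁻¹ • b ^ m

/-- The cohomology of the (parity-reversing) differential `D` on the parity subspace `P`:
the kernel of `D` intersected with `P`, modulo the image of `D`. -/
abbrev cohQuot {A : Type*} [Ring A] [Algebra ℝ A] (D : A →ₗ[ℝ] A) (P : Submodule ℝ A) :=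
  ↥(P ⊓ LinearMap.ker D) ⧸ (LinearMap.range D).comap (P ⊓ LinearMap.ker D).subtype

lemma alt_factorial_sum (s : ℕ) (hs : s ≠ 0) :
    ∑ p ∈ Finset.HasAntidiagonal.antidiagonal s,
      (-1 : ℝ) ^ p.2 * (((p.1.factorial : ℝ))⁻¹ * ((p.2.factorial : ℝ))⁻¹) = 0 := by
  rw [← Finset.Nat.sum_antidiagonal_swap]
  simp only [Prod.fst_swap, Prod.snd_swap]
  rw [Finset.Nat.sum_antidiagonal_eq_sum_range_succ
    (fun i j => (-1 : ℝ) ^ i * (((j.factorial : ℝ))⁻¹ * ((i.factorial : ℝ))⁻¹))]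
  have key : ∀ k ∈ Finset.range (s + 1),
      (-1 : ℝ) ^ k * ((((s - k).factorial : ℝ))⁻¹ * ((k.factorial : ℝ))⁻¹)
        = ((-1 : ℝ) ^ k * (s.choose k : ℝ)) * ((s.factorial : ℝ))⁻¹ := by
    intro k hk
    have hks : k ≤ s := Nat.lt_succ_iff.mp (Finset.mem_range.mp hk)
    have hc : (s.choose k : ℝ) = (s.factorial : ℝ) / ((k.factorial : ℝ) * ((s - k).factorial : ℝ)) :=
      Nat.cast_choose ℝ hks
    have h1 : ((k.factorial : ℝ)) ≠ 0 := Nat.cast_ne_zero.mpr k.factorial_ne_zero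
    have h2 : (((s - k).factorial : ℝ)) ≠ 0 := Nat.cast_ne_zero.mpr (s - k).factorial_ne_zero
    have h3 : ((s.factorial : ℝ)) ≠ 0 := Nat.cast_ne_zero.mpr s.factorial_ne_zero
    field_simp [hc]
    rw [hc]
    field_simp
  rw [Finset.sum_congr rfl key, ← Finset.sum_mul]
  have : (∑ k ∈ Finset.range (s + 1), (-1 : ℝ) ^ k * (s.choose k : ℝ)) = 0 := by
    have h := add_pow (-1 : ℝ) 1 s
    simp only [one_pow, mul_one, neg_add_cancel] at h
    rw [← h, zero_pow hs]
  rw [this, zero_mul]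

lemma expSum_mul_expSum_neg {A : Type*} [Ring A] [Algebra ℝ A] (n : ℕ) (b : A)
    (hb : ∀ m : ℕ, n < m → b ^ m = 0) :
    expSum n b * expSum n (-b) = 1 := by
  have hneg : ∀ j : ℕ, (-b) ^ j = ((-1 : ℝ) ^ j) • b ^ j := by
    intro j
    rw [← neg_one_smul ℝ b, smul_pow]
  unfold expSum
  rw [Finset.sum_mul_sum]
  have hterm : ∀ i j : ℕ,
      ((i.factorial : ℝ)⁻¹ • b ^ i) * ((j.factorial : ℝ)⁻¹ • (-b) ^ j)
      = ((-1 : ℝ) ^ j * (((i.factorial : ℝ))⁻¹ * ((j.factorial : ℝ))⁻¹)) • b ^ (i + j) := by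
    intro i j
    rw [hneg j, smul_smul, smul_mul_assoc, mul_smul_comm, smul_smul, ← pow_add]
    ring_nf
  simp only [hterm]
  rw [← Finset.sum_product']
  set c : ℕ × ℕ → ℝ := fun p => (-1 : ℝ) ^ p.2 * (((p.1.factorial : ℝ))⁻¹ * ((p.2.factorial : ℝ))⁻¹)
    with hc
  have hmaps : ∀ p ∈ Finset.range (n + 1) ×ˢ Finset.range (n + 1),
      p.1 + p.2 ∈ Finset.range (2 * n + 1) := by
    intro p hp
    rw [Finset.mem_product, Finset.mem_range, Finset.mem_range] at hp
    rw [Finset.mem_range]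
    omega
  rw [← Finset.sum_fiberwise_of_maps_to hmaps (fun p => c p • b ^ (p.1 + p.2))]
  have hfib : ∀ s ∈ Finset.range (2 * n + 1),
      (∑ p ∈ (Finset.range (n + 1) ×ˢ Finset.range (n + 1)).filter (fun p => p.1 + p.2 = s),
        c p • b ^ (p.1 + p.2)) = if s = 0 then 1 else 0 := by
    intro s _
    have hrw : ∀ p ∈ (Finset.range (n + 1) ×ˢ Finset.range (n + 1)).filter
        (fun p => p.1 + p.2 = s), c p • b ^ (p.1 + p.2) = c p • b ^ s := by
      intro p hp
      rw [Finset.mem_filter] at hp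
      rw [hp.2]
    rw [Finset.sum_congr rfl hrw, ← Finset.sum_smul]
    rcases eq_or_ne s 0 with h0 | h0
    · subst h0
      have hfe : (Finset.range (n + 1) ×ˢ Finset.range (n + 1)).filter
          (fun p => p.1 + p.2 = 0) = {(0, 0)} := by
        ext p
        simp only [Finset.mem_filter, Finset.mem_product, Finset.mem_range,
          Finset.mem_singleton, Prod.ext_iff]
        omega
      rw [hfe]
      simp [hc]
    · rw [if_neg h0]
      rcases le_or_gt s n with hsn | hsn
      · have hfe : (Finset.range (n + 1) ×ˢ Finset.range (n + 1)).filter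
            (fun p => p.1 + p.2 = s) = Finset.HasAntidiagonal.antidiagonal s := by
          ext p
          simp only [Finset.mem_filter, Finset.mem_product, Finset.mem_range,
            Finset.HasAntidiagonal.mem_antidiagonal]
          omega
        rw [hfe, alt_factorial_sum s h0, zero_smul]
      · rw [hb s hsn, smul_zero]
  rw [Finset.sum_congr rfl hfib, Finset.sum_ite_eq' (Finset.range (2 * n + 1)) 0 (fun _ => (1:A))]
  simp

private def commSub {A : Type*} [Ring A] [Algebra ℝ A] (x : A) : Submodule ℝ A where
  carrier := {y : A | x * y = y * x}
  add_mem' := by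
    intro a c ha hc
    simp only [Set.mem_setOf_eq] at *
    rw [mul_add, add_mul, ha, hc]
  zero_mem' := by simp
  smul_mem' := by
    intro r a ha
    simp only [Set.mem_setOf_eq] at *
    rw [mul_smul_comm, smul_mul_assoc, ha]

private def leibSub {A : Type*} [Ring A] [Algebra ℝ A] (d : A →ₗ[ℝ] A) (x : A) :
    Submodule ℝ A where
  carrier := {y : A | d (x * y) = d x * y + x * d y}
  add_mem' := by
    intro a c ha hc
    simp only [Set.mem_setOf_eq] at *
    simp only [mul_add, add_mul, map_add, ha, hc]
    abel
  zero_mem' := by simp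
  smul_mem' := by
    intro r a ha
    simp only [Set.mem_setOf_eq] at *
    rw [mul_smul_comm r x a, map_smul, ha, map_smul, mul_smul_comm r (d x) a,
      mul_smul_comm r x (d a), smul_add]

lemma cohQuot_equiv {A : Type*} [Ring A] [Algebra ℝ A]
    (D D' : A →ₗ[ℝ] A) (P : Submodule ℝ A) (e : A ≃ₗ[ℝ] A)
    (hcomm : ∀ x, e (D' x) = D (e x))
    (hP : Submodule.map (e : A →ₗ[ℝ] A) P = P) :
    Nonempty (cohQuot D' P ≃ₗ[ℝ] cohQuot D P) := by
  have hker : Submodule.map (e : A →ₗ[ℝ] A) (LinearMap.ker D') = LinearMap.ker D := by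
    apply le_antisymm
    · rintro _ ⟨x, hx, rfl⟩
      simp only [SetLike.mem_coe, LinearMap.mem_ker, LinearEquiv.coe_coe] at hx ⊢
      rw [← hcomm, hx, map_zero]
    · intro y hy
      refine ⟨e.symm y, ?_, by simp⟩
      simp only [SetLike.mem_coe, LinearMap.mem_ker, LinearEquiv.coe_coe] at hy ⊢
      apply e.injective
      rw [hcomm, e.apply_symm_apply, hy, map_zero]
  have hinf : Submodule.map (e : A →ₗ[ℝ] A) (P ⊓ LinearMap.ker D') = P ⊓ LinearMap.ker D := by
    rw [Submodule.map_inf (e : A →ₗ[ℝ] A) (fun a c hac => e.injective hac), hP, hker]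
  have hrange : Submodule.map (e : A →ₗ[ℝ] A) (LinearMap.range D') = LinearMap.range D := by
    apply le_antisymm
    · rintro _ ⟨_, ⟨x, rfl⟩, rfl⟩
      exact ⟨e x, ((hcomm x).symm : D (e x) = e (D' x))⟩
    · rintro _ ⟨x, rfl⟩
      refine ⟨D' (e.symm x), ⟨e.symm x, rfl⟩, ?_⟩
      show e (D' (e.symm x)) = D x
      rw [hcomm, e.apply_symm_apply]
  let f : ↥(P ⊓ LinearMap.ker D') ≃ₗ[ℝ] ↥(P ⊓ LinearMap.ker D) :=
    (e.submoduleMap (P ⊓ LinearMap.ker D')).trans (LinearEquiv.ofEq _ _ hinf)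
  refine ⟨Submodule.Quotient.equiv _ _ f ?_⟩
  apply le_antisymm
  · rintro _ ⟨⟨x, hx⟩, hxm, rfl⟩
    simp only [Submodule.mem_comap, Submodule.subtype_apply] at hxm ⊢
    have hval : ((f ⟨x, hx⟩ : ↥(P ⊓ LinearMap.ker D)) : A) = e x := by
      simp [f]
    show ((f ⟨x, hx⟩ : ↥(P ⊓ LinearMap.ker D)) : A) ∈ LinearMap.range D
    rw [hval, ← hrange]
    exact ⟨x, hxm, rfl⟩
  · rintro ⟨y, hy⟩ hym
    simp only [Submodule.mem_comap, Submodule.subtype_apply] at hym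
    have hx' : e.symm y ∈ P ⊓ LinearMap.ker D' := by
      rw [← hinf] at hy
      obtain ⟨x, hx, hex⟩ := hy
      rwa [show e.symm y = x from by rw [← hex]; simp]
    have hxr : e.symm y ∈ LinearMap.range D' := by
      rw [← hrange] at hym
      obtain ⟨x, hx, hex⟩ := hym
      rwa [show e.symm y = x from by rw [← hex]; simp]
    refine ⟨⟨e.symm y, hx'⟩, hxr, ?_⟩
    apply Subtype.ext
    simp [f]

/-- Let `A` be a graded-commutative DGA over `ℝ` with `𝒜 k = ⊥` for `k < 0`
and `k > n`; let `h` be a sum of homogeneous odd-degree elements with `d h = 0`, and let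
`b` be a sum of homogeneous elements of positive even degree (hence nilpotent:
`b ^ m = 0` for `m > n`).  Set `h' = h + d b`.  Then left multiplication by the finite sum
`exp b = Σ bᵐ/m!` is an invertible chain map of ℤ₂-graded complexes from `(A, d_{h'})` to
`(A, d_h)` with inverse left multiplication by `exp (−b)`, and consequently it induces
isomorphisms `H^±(A, d_{h'}) ≅ H^±(A, d_h)`: the twisted cohomology depends only on the
`d`-cohomology class of `h`. -/
theorem twisted_cohomology_gauge_invariance
    {A : Type*} [Ring A] [Algebra ℝ A]
    (𝒜 : ℤ → Submodule ℝ A) [GradedAlgebra 𝒜]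
    (gcomm : ∀ (i j : ℤ), ∀ x ∈ 𝒜 i, ∀ y ∈ 𝒜 j,
      x * y = ((-1 : ℝ) ^ (i * j)) • (y * x))
    (d : A →ₗ[ℝ] A)
    (hd_deg : ∀ k : ℤ, Submodule.map d (𝒜 k) ≤ 𝒜 (k + 1))
    (hd2 : d ∘ₗ d = 0)
    (leibniz : ∀ (i j : ℤ), ∀ x ∈ 𝒜 i, ∀ y ∈ 𝒜 j,
      d (x * y) = d x * y + ((-1 : ℝ) ^ i) • (x * d y))
    (n : ℕ)
    (hbdd : ∀ k : ℤ, (k < 0 ∨ (n : ℤ) < k) → 𝒜 k = ⊥)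
    (h : A)
    (h_odd : h ∈ ⨆ k : ℤ, 𝒜 (2 * k + 1))
    (h_closed : d h = 0)
    (b : A)
    (b_even_pos : b ∈ ⨆ k : ℕ, 𝒜 (2 * ((k : ℤ) + 1))) :
    -- `b` is nilpotent, so the exponential sum is a finite sum computing `Σ_{m≥0} bᵐ/m!`
    (∀ m : ℕ, n < m → b ^ m = 0) ∧
    -- left multiplication by `exp b` is invertible, with inverse multiplication by `exp (−b)`
    (expSum n b * expSum n (-b) = 1 ∧ expSum n (-b) * expSum n b = 1) ∧
    -- it is a chain map from `(A, d_{h + d b})` to `(A, d_h)`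
    (∀ x : A, expSum n b * (d x + (h + d b) * x)
        = d (expSum n b * x) + h * (expSum n b * x)) ∧
    -- consequently the even and odd twisted cohomology groups are isomorphic
    Nonempty (cohQuot (d + mulLeft ℝ (h + d b)) (⨆ k : ℤ, 𝒜 (2 * k)) ≃ₗ[ℝ]
      cohQuot (d + mulLeft ℝ h) (⨆ k : ℤ, 𝒜 (2 * k))) ∧
    Nonempty (cohQuot (d + mulLeft ℝ (h + d b)) (⨆ k : ℤ, 𝒜 (2 * k + 1)) ≃ₗ[ℝ]
      cohQuot (d + mulLeft ℝ h) (⨆ k : ℤ, 𝒜 (2 * k + 1))) := by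
  classical
  set E : Submodule ℝ A := ⨆ k : ℤ, 𝒜 (2 * k) with hEdef
  set O : Submodule ℝ A := ⨆ k : ℤ, 𝒜 (2 * k + 1) with hOdef
  -- every element is in the supremum of the grades
  have htop : ∀ y : A, y ∈ ⨆ k : ℤ, 𝒜 k := by
    intro y
    rw [DirectSum.IsInternal.submodule_iSup_eq_top (DirectSum.Decomposition.isInternal 𝒜)]
    trivial
  have hspan : ∀ (S : Submodule ℝ A), (∀ k : ℤ, 𝒜 k ≤ S) → ∀ y : A, y ∈ S := by
    intro S hS y
    exact (iSup_le hS : (⨆ k : ℤ, 𝒜 k) ≤ S) (htop y)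
  -- homogeneous even elements are central
  have hcomm0 : ∀ (k : ℤ) (x : A), x ∈ 𝒜 (2 * k) → ∀ y : A, x * y = y * x := by
    intro k x hx
    have key : ∀ y : A, y ∈ commSub x := by
      refine hspan _ ?_
      intro j z hz
      have hg := gcomm (2 * k) j x hx z hz
      have hsgn : ((-1 : ℝ) ^ (2 * k * j)) = 1 := Even.neg_one_zpow ⟨k * j, by ring⟩
      show x * z = z * x
      rw [hg, hsgn, one_smul]
    exact key
  have central : ∀ x ∈ E, ∀ y : A, x * y = y * x := by
    intro x hx
    refine Submodule.iSup_induction (motive := fun x : A => ∀ y : A, x * y = y * x)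
      (fun k : ℤ => 𝒜 (2 * k)) hx (fun k x hxk => hcomm0 k x hxk) (by simp) ?_
    intro a c ha hc y
    rw [add_mul, mul_add, ha, hc]
  -- Leibniz for even elements (no sign)
  have hleib0 : ∀ (k : ℤ) (x : A), x ∈ 𝒜 (2 * k) → ∀ y : A, d (x * y) = d x * y + x * d y := by
    intro k x hx
    have key : ∀ y : A, y ∈ leibSub d x := by
      refine hspan _ ?_
      intro j z hz
      have hg := leibniz (2 * k) j x hx z hz
      have hsgn : ((-1 : ℝ) ^ (2 * k : ℤ)) = 1 := Even.neg_one_zpow ⟨k, by ring⟩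
      show d (x * z) = d x * z + x * d z
      rw [hg, hsgn, one_smul]
    exact key
  have hleibE : ∀ x ∈ E, ∀ y : A, d (x * y) = d x * y + x * d y := by
    intro x hx
    refine Submodule.iSup_induction (motive := fun x : A => ∀ y : A, d (x * y) = d x * y + x * d y)
      (fun k : ℤ => 𝒜 (2 * k)) hx (fun k x hxk => hleib0 k x hxk) (by simp) ?_
    intro a c ha hc y
    rw [add_mul, map_add, ha, hc, map_add, add_mul, add_mul]
    abel
  -- membership facts for E and O
  have hone : (1 : A) ∈ E := by
    have h1 : (1 : A) ∈ 𝒜 (2 * (0 : ℤ)) := by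
      norm_num
      exact SetLike.one_mem_graded 𝒜
    exact le_iSup (fun k : ℤ => 𝒜 (2 * k)) 0 h1
  have hmulE : ∀ x ∈ E, ∀ y ∈ E, x * y ∈ E := by
    intro x hx
    refine Submodule.iSup_induction (motive := fun x : A => ∀ y ∈ E, x * y ∈ E)
      (fun k : ℤ => 𝒜 (2 * k)) hx ?_ (by intro y hy; show (0:A) * y ∈ E; rw [zero_mul]; exact zero_mem E) ?_
    · intro k x hxk y hy
      refine Submodule.iSup_induction (motive := fun y : A => x * y ∈ E)
        (fun l : ℤ => 𝒜 (2 * l)) hy ?_ (by show x * (0:A) ∈ E; rw [mul_zero]; exact zero_mem E) ?_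
      · intro l y hyl
        have hm := SetLike.mul_mem_graded hxk hyl
        have heq : (2 * k + 2 * l : ℤ) = 2 * (k + l) := by ring
        rw [heq] at hm
        exact le_iSup (fun k : ℤ => 𝒜 (2 * k)) (k + l) hm
      · intro a c ha hc
        show x * (a + c) ∈ _
        rw [mul_add]
        exact add_mem ha hc
    · intro a c ha hc y hy
      show (a + c) * y ∈ _
      rw [add_mul]
      exact add_mem (ha y hy) (hc y hy)
  have hmulEO : ∀ x ∈ E, ∀ y ∈ O, x * y ∈ O := by
    intro x hx
    refine Submodule.iSup_induction (motive := fun x : A => ∀ y ∈ O, x * y ∈ O)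
      (fun k : ℤ => 𝒜 (2 * k)) hx ?_ (by intro y hy; show (0:A) * y ∈ O; rw [zero_mul]; exact zero_mem O) ?_
    · intro k x hxk y hy
      refine Submodule.iSup_induction (motive := fun y : A => x * y ∈ O)
        (fun l : ℤ => 𝒜 (2 * l + 1)) hy ?_ (by show x * (0:A) ∈ O; rw [mul_zero]; exact zero_mem O) ?_
      · intro l y hyl
        have hm := SetLike.mul_mem_graded hxk hyl
        have heq : (2 * k + (2 * l + 1) : ℤ) = 2 * (k + l) + 1 := by ring
        rw [heq] at hm
        exact le_iSup (fun k : ℤ => 𝒜 (2 * k + 1)) (k + l) hm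
      · intro a c ha hc
        show x * (a + c) ∈ _
        rw [mul_add]
        exact add_mem ha hc
    · intro a c ha hc y hy
      show (a + c) * y ∈ _
      rw [add_mul]
      exact add_mem (ha y hy) (hc y hy)
  -- tail submodules
  set P : ℤ → Submodule ℝ A := fun j => ⨆ m : ℕ, 𝒜 (j + m) with hPdef
  have hPbot : ∀ j : ℤ, (n : ℤ) < j → P j = ⊥ := by
    intro j hj
    refine le_bot_iff.mp (iSup_le fun m => ?_)
    rw [hbdd (j + m) (Or.inr (by omega))]
  have hPmul : ∀ i j : ℤ, ∀ x ∈ P i, ∀ y ∈ P j, x * y ∈ P (i + j) := by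
    intro i j x hx
    refine Submodule.iSup_induction (motive := fun x : A => ∀ y ∈ P j, x * y ∈ P (i + j))
      (fun m : ℕ => 𝒜 ((i : ℤ) + m)) hx ?_ (by intro y hy; show (0:A) * y ∈ P (i+j); rw [zero_mul]; exact zero_mem _) ?_
    · intro m₁ x hx1 y hy
      refine Submodule.iSup_induction (motive := fun y : A => x * y ∈ P (i + j))
        (fun m : ℕ => 𝒜 ((j : ℤ) + m)) hy ?_ (by show x * (0:A) ∈ P (i+j); rw [mul_zero]; exact zero_mem _) ?_
      · intro m₂ y hy2
        have hm := SetLike.mul_mem_graded hx1 hy2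
        have heq : (i + m₁ + (j + m₂) : ℤ) = (i + j) + (m₁ + m₂ : ℕ) := by push_cast; ring
        rw [heq] at hm
        exact le_iSup (fun m : ℕ => 𝒜 (i + j + m)) (m₁ + m₂) hm
      · intro a c ha hc
        show x * (a + c) ∈ _
        rw [mul_add]
        exact add_mem ha hc
    · intro a c ha hc y hy
      show (a + c) * y ∈ _
      rw [add_mul]
      exact add_mem (ha y hy) (hc y hy)
  have hPd : ∀ i : ℤ, ∀ x ∈ P i, d x ∈ P (i + 1) := by
    intro i x hx
    have hmem : d x ∈ Submodule.map d (P i) := ⟨x, hx, rfl⟩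
    have hle : Submodule.map d (P i) ≤ P (i + 1) := by
      rw [hPdef]
      simp only
      rw [Submodule.map_iSup]
      refine iSup_le fun m => le_trans (hd_deg (i + m)) ?_
      have heq : (i + m + 1 : ℤ) = (i + 1) + m := by ring
      rw [heq]
      exact le_iSup (fun m : ℕ => 𝒜 (i + 1 + m)) m
    exact hle hmem
  have hbP : b ∈ P 2 := by
    refine (iSup_le fun k => ?_ : (⨆ k : ℕ, 𝒜 (2 * ((k : ℤ) + 1))) ≤ P 2) b_even_pos
    have heq : (2 * ((k : ℤ) + 1)) = 2 + ((2 * k : ℕ) : ℤ) := by push_cast; ring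
    rw [heq]
    exact le_iSup (fun m : ℕ => 𝒜 (2 + m)) (2 * k)
  have hbpowP : ∀ m : ℕ, b ^ m ∈ P (2 * m) := by
    intro m
    induction m with
    | zero =>
      rw [pow_zero]
      have h1 : (1 : A) ∈ 𝒜 ((2 * (0:ℕ) : ℤ) + (0 : ℕ)) := by
        norm_num
        exact SetLike.one_mem_graded 𝒜
      exact le_iSup (fun m : ℕ => 𝒜 ((2 * (0:ℕ) : ℤ) + m)) 0 h1
    | succ m ih =>
      rw [pow_succ]
      have hmm := hPmul (2 * (m : ℤ)) 2 _ ih _ hbP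
      have heq : (2 * (m : ℤ)) + 2 = 2 * (((m + 1 : ℕ)) : ℤ) := by push_cast; ring
      rwa [heq] at hmm
  have hbnil : ∀ m : ℕ, n < m → b ^ m = 0 := by
    intro m hm
    have := hbpowP m
    rw [hPbot (2 * (m : ℤ)) (by omega)] at this
    simpa using this
  -- b and exp-sums are even
  have hbE : b ∈ E := by
    refine (iSup_le fun k => ?_ : (⨆ k : ℕ, 𝒜 (2 * ((k : ℤ) + 1))) ≤ E) b_even_pos
    exact le_iSup (fun k : ℤ => 𝒜 (2 * k)) ((k : ℤ) + 1)
  have hbpowE : ∀ m : ℕ, b ^ m ∈ E := by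
    intro m
    induction m with
    | zero => rw [pow_zero]; exact hone
    | succ m ih => rw [pow_succ]; exact hmulE _ ih _ hbE
  have hexpE : expSum n b ∈ E :=
    Submodule.sum_mem _ fun m _ => Submodule.smul_mem _ _ (hbpowE m)
  have hexpnegE : expSum n (-b) ∈ E := by
    refine Submodule.sum_mem _ fun m _ => ?_
    rw [← neg_one_smul ℝ b, smul_pow, smul_smul]
    exact Submodule.smul_mem _ _ (hbpowE m)
  -- d 1 = 0
  have hd1 : d (1 : A) = 0 := by
    have := hleibE 1 hone 1
    rw [one_mul, one_mul, mul_one] at this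
    have h2 : d (1 : A) = d 1 + d 1 := this
    have := left_eq_add.mp h2
    exact this
  -- derivative of powers
  have hdpow : ∀ m : ℕ, d (b ^ (m + 1)) = ((m : ℝ) + 1) • (b ^ m * d b) := by
    intro m
    induction m with
    | zero => simp
    | succ m ih =>
      have hb1 : b ^ (m + 1) ∈ E := hbpowE (m + 1)
      have hstep : d (b ^ (m + 2)) = d b * b ^ (m + 1) + b * d (b ^ (m + 1)) := by
        rw [show b ^ (m + 2) = b * b ^ (m + 1) from pow_succ' b (m + 1)]
        exact hleibE b hbE (b ^ (m + 1))
      rw [hstep, ih, ← central (b ^ (m + 1)) hb1 (d b), mul_smul_comm, ← mul_assoc,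
        ← pow_succ']
      rw [show (((m + 1 : ℕ) : ℝ) + 1) = 1 + ((m : ℝ) + 1) from by push_cast; ring]
      simp only [add_smul, one_smul]
  -- derivative of the exponential
  have hdb3 : d b ∈ P 3 := by
    have := hPd 2 b hbP
    norm_num at this
    exact this
  have hbn_db : b ^ n * d b = 0 := by
    have hmem := hPmul (2 * (n : ℤ)) 3 _ (hbpowP n) _ hdb3
    rw [hPbot (2 * (n : ℤ) + 3) (by omega)] at hmem
    simpa using hmem
  have hdexp : d (expSum n b) = expSum n b * d b := by
    have hL : d (expSum n b)
        = ∑ m ∈ Finset.range n, ((m.factorial : ℝ))⁻¹ • (b ^ m * d b) := by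
      rw [show d (expSum n b)
          = ∑ m ∈ Finset.range (n + 1), (m.factorial : ℝ)⁻¹ • d (b ^ m) from by
        rw [expSum, map_sum]
        exact Finset.sum_congr rfl fun m _ => by rw [map_smul]]
      rw [Finset.sum_range_succ']
      simp only [pow_zero, hd1, smul_zero, add_zero]
      refine Finset.sum_congr rfl fun m _ => ?_
      rw [hdpow m, smul_smul]
      congr 1
      have hfac : ((m + 1).factorial : ℝ) = ((m + 1 : ℕ) : ℝ) * (m.factorial : ℝ) := by
        rw [Nat.factorial_succ]; push_cast; ring
      have h1 : ((m.factorial : ℝ)) ≠ 0 := Nat.cast_ne_zero.mpr m.factorial_ne_zero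
      have h2 : (((m + 1 : ℕ)) : ℝ) ≠ 0 := Nat.cast_ne_zero.mpr (Nat.succ_ne_zero m)
      rw [hfac]
      push_cast
      field_simp
    have hR : expSum n b * d b
        = ∑ m ∈ Finset.range (n + 1), ((m.factorial : ℝ))⁻¹ • (b ^ m * d b) := by
      rw [expSum, Finset.sum_mul]
      exact Finset.sum_congr rfl fun m _ => smul_mul_assoc _ _ _
    rw [hL, hR, Finset.sum_range_succ, hbn_db, smul_zero, add_zero]
  -- the chain map property
  have chain : ∀ x : A, expSum n b * (d x + (h + d b) * x)
      = d (expSum n b * x) + h * (expSum n b * x) := by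
    intro x
    have hleibexp := hleibE (expSum n b) hexpE x
    rw [hleibexp, hdexp]
    rw [mul_add, add_mul, mul_add]
    rw [show expSum n b * (h * x) = h * (expSum n b * x) from by
      rw [← mul_assoc, central (expSum n b) hexpE h, mul_assoc]]
    rw [show expSum n b * (d b * x) = expSum n b * d b * x from (mul_assoc _ _ _).symm]
    abel
  -- invertibility
  have hinv1 : expSum n b * expSum n (-b) = 1 := expSum_mul_expSum_neg n b hbnil
  have hbnil' : ∀ m : ℕ, n < m → (-b) ^ m = 0 := by
    intro m hm
    rw [← neg_one_smul ℝ b, smul_pow, hbnil m hm, smul_zero]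
  have hinv2 : expSum n (-b) * expSum n b = 1 := by
    have := expSum_mul_expSum_neg n (-b) hbnil'
    rwa [neg_neg] at this
  -- the linear equivalence given by multiplication by exp b
  let e : A ≃ₗ[ℝ] A := LinearEquiv.ofLinear (mulLeft ℝ (expSum n b)) (mulLeft ℝ (expSum n (-b)))
    (by ext x; simp only [coe_comp, Function.comp_apply, mulLeft_apply, id_coe, id_eq,
      ← mul_assoc, hinv1, one_mul])
    (by ext x; simp only [coe_comp, Function.comp_apply, mulLeft_apply, id_coe, id_eq,
      ← mul_assoc, hinv2, one_mul])
  have he_apply : ∀ x : A, e x = expSum n b * x := fun x => rfl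
  have he_symm : ∀ x : A, e.symm x = expSum n (-b) * x := fun x => rfl
  have hcommchain : ∀ x : A,
      e ((d + mulLeft ℝ (h + d b)) x) = (d + mulLeft ℝ h) (e x) := by
    intro x
    simp only [he_apply, LinearMap.add_apply, mulLeft_apply]
    exact chain x
  have hmapE : Submodule.map (e : A →ₗ[ℝ] A) E = E := by
    apply le_antisymm
    · rintro _ ⟨x, hx, rfl⟩
      exact hmulE _ hexpE _ hx
    · intro y hy
      exact ⟨expSum n (-b) * y, hmulE _ hexpnegE _ hy, by
        show expSum n b * (expSum n (-b) * y) = y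
        rw [← mul_assoc, hinv1, one_mul]⟩
  have hmapO : Submodule.map (e : A →ₗ[ℝ] A) O = O := by
    apply le_antisymm
    · rintro _ ⟨x, hx, rfl⟩
      exact hmulEO _ hexpE _ hx
    · intro y hy
      exact ⟨expSum n (-b) * y, hmulEO _ hexpnegE _ hy, by
        show expSum n b * (expSum n (-b) * y) = y
        rw [← mul_assoc, hinv1, one_mul]⟩
  exact ⟨hbnil, ⟨hinv1, hinv2⟩, chain,
    cohQuot_equiv _ _ E e hcommchain hmapE,
    cohQuot_equiv _ _ O e hcommchain hmapO⟩
end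

section
/- Let n ≥ 3 be odd and let A be a graded-commutative DGA over ℝ with Aᵏ = 0 for k < 0 and for k > n. Let h ∈ Aⁿ (which is automatically d-closed), and suppose that the map H⁰(A,d) → Hⁿ(A,d) induced by left multiplication by h, [λ] ↦ [h·λ], is a bijection. Then the ℤ₂-graded twisted cohomology of d_h(x) = dx + h·x satisfies: the even twisted cohomology H⁺(A, d_h) is isomorphic to ⊕_{k even, 2 ≤ k ≤ n−1} Hᵏ(A,d), and the odd twisted cohomology H⁻(A, d_h) is isomorphic to ⊕_{k odd, 1 ≤ k ≤ n−2} Hᵏ(A,d). In particular H(A, d_h) ≅ ⊕_{k=1}^{n−1} Hᵏ(A,d). -/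
open LinearMap DirectSum

/-- The ordinary degree-`k` cohomology `Hᵏ(A, d) = (𝒜 k ∩ ker d) / im d` of a graded
complex. -/
abbrev gradedCoh {A : Type*} [Ring A] [Algebra ℝ A] (𝒜 : ℤ → Submodule ℝ A)
    (d : A →ₗ[ℝ] A) (k : ℤ) :=
  ↥(𝒜 k ⊓ LinearMap.ker d) ⧸ (LinearMap.range d).comap (𝒜 k ⊓ LinearMap.ker d).subtype

section Helpers

variable {A : Type*} [Ring A] [Algebra ℝ A] (𝒜 : ℤ → Submodule ℝ A) [GradedAlgebra 𝒜]

/-- degree-`k` projection, as a linear map `A →ₗ[ℝ] A`. -/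
noncomputable def projL (k : ℤ) : A →ₗ[ℝ] A :=
  (𝒜 k).subtype ∘ₗ (DFinsupp.lapply k) ∘ₗ (DirectSum.decomposeLinearEquiv 𝒜).toLinearMap

lemma projL_apply (k : ℤ) (x : A) : projL 𝒜 k x = (DirectSum.decompose 𝒜 x k : A) := rfl

lemma projL_mem (k : ℤ) (x : A) : projL 𝒜 k x ∈ 𝒜 k := (DirectSum.decompose 𝒜 x k).2

lemma projL_of_mem_same {k : ℤ} {x : A} (hx : x ∈ 𝒜 k) : projL 𝒜 k x = x :=
  DirectSum.decompose_of_mem_same 𝒜 hx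

lemma projL_of_mem_ne {i k : ℤ} {x : A} (hx : x ∈ 𝒜 i) (hik : i ≠ k) : projL 𝒜 k x = 0 :=
  DirectSum.decompose_of_mem_ne 𝒜 hx hik

lemma projL_d (d : A →ₗ[ℝ] A) (hd_deg : ∀ k : ℤ, Submodule.map d (𝒜 k) ≤ 𝒜 (k + 1))
    (k : ℤ) (x : A) : projL 𝒜 k (d x) = d (projL 𝒜 (k - 1) x) := by
  refine DirectSum.Decomposition.inductionOn 𝒜 (motive := fun y => projL 𝒜 k (d y) = d (projL 𝒜 (k - 1) y)) ?_ ?_ ?_ x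
  · simp
  · intro i m
    have hdm : d (m : A) ∈ 𝒜 (i + 1) := hd_deg i ⟨m, m.2, rfl⟩
    by_cases hk : k = i + 1
    · rw [projL_of_mem_same 𝒜 (hk ▸ hdm),
        projL_of_mem_same 𝒜 (show (m : A) ∈ 𝒜 (k - 1) by rw [hk]; simpa using m.2)]
    · rw [projL_of_mem_ne 𝒜 hdm (fun hc => hk hc.symm),
        projL_of_mem_ne 𝒜 m.2 (by omega), map_zero]
  · intro a b ha hb
    simp only [map_add, ha, hb]

lemma mul_projL_zero (n : ℕ) (hbdd : ∀ k : ℤ, (k < 0 ∨ (n : ℤ) < k) → 𝒜 k = ⊥)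
    (h : A) (hh : h ∈ 𝒜 (n : ℤ)) (x : A) : h * x = h * projL 𝒜 0 x := by
  refine DirectSum.Decomposition.inductionOn 𝒜 (motive := fun y => h * y = h * projL 𝒜 0 y) ?_ ?_ ?_ x
  · simp
  · intro i m
    by_cases hi : i = 0
    · rw [projL_of_mem_same 𝒜 (show (m : A) ∈ 𝒜 0 from hi ▸ m.2)]
    · rw [projL_of_mem_ne 𝒜 m.2 hi, mul_zero]
      rcases lt_or_gt_of_ne hi with hlt | hgt
      · have : (m : A) ∈ (⊥ : Submodule ℝ A) := (hbdd i (Or.inl hlt)) ▸ m.2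
        rw [Submodule.mem_bot] at this
        rw [this, mul_zero]
      · have hmem : h * (m : A) ∈ 𝒜 ((n : ℤ) + i) := SetLike.mul_mem_graded hh m.2
        have : h * (m : A) ∈ (⊥ : Submodule ℝ A) :=
          (hbdd ((n : ℤ) + i) (Or.inr (by omega))) ▸ hmem
        rwa [Submodule.mem_bot] at this
  · intro a b ha hb
    simp only [mul_add, map_add, ha, hb]

lemma mul_projL_mem (n : ℕ) (h : A) (hh : h ∈ 𝒜 (n : ℤ)) (x : A) :
    h * projL 𝒜 0 x ∈ 𝒜 (n : ℤ) := by
  simpa using SetLike.mul_mem_graded hh (projL_mem 𝒜 0 x)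

/-- The dependent product over a sum type, as a linear equivalence. -/
def sumPiLequivProdPi (R : Type*) [Semiring R] {α β : Type*} (M : α ⊕ β → Type*)
    [∀ i, AddCommMonoid (M i)] [∀ i, Module R (M i)] :
    (∀ i, M i) ≃ₗ[R] (∀ a, M (.inl a)) × (∀ b, M (.inr b)) where
  toFun f := (fun a => f (.inl a), fun b => f (.inr b))
  invFun g i := Sum.rec g.1 g.2 i
  map_add' _ _ := rfl
  map_smul' _ _ := rfl
  left_inv f := by funext i; cases i <;> rfl
  right_inv g := rfl

end Helpers

section AuxIso

variable {A : Type*} [Ring A] [Algebra ℝ A] (𝒜 : ℤ → Submodule ℝ A) [GradedAlgebra 𝒜]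

set_option maxHeartbeats 1000000 in
theorem auxIso
    (d : A →ₗ[ℝ] A) (hd_deg : ∀ k : ℤ, Submodule.map d (𝒜 k) ≤ 𝒜 (k + 1))
    (n : ℕ) (hbdd : ∀ k : ℤ, (k < 0 ∨ (n : ℤ) < k) → 𝒜 k = ⊥)
    (h : A) (hh : h ∈ 𝒜 (n : ℤ))
    (htop : ∀ z ∈ 𝒜 (n : ℤ), z ∈ LinearMap.range (d + mulLeft ℝ h))
    (S : Type) [Fintype S] [DecidableEq S] (ι : S → ℤ) (hι : Function.Injective ι)
    (hlb : ∀ s, 1 ≤ ι s) (hub : ∀ s, ι s < n)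
    (P : Submodule ℝ A)
    (hmem : ∀ s, 𝒜 (ι s) ≤ P)
    (hker0 : ∀ x ∈ P, (d + mulLeft ℝ h) x = 0 → projL 𝒜 0 x = 0)
    (hcover : ∀ x ∈ P, (d + mulLeft ℝ h) x = 0 → ∀ j : ℤ, (∀ s, ι s ≠ j) →
        projL 𝒜 j x ∈ LinearMap.range (d + mulLeft ℝ h)) :
    Nonempty (cohQuot (d + mulLeft ℝ h) P ≃ₗ[ℝ] ⨁ s, gradedCoh 𝒜 d (ι s)) := by
  classical
  letI : AddCommGroup (⨁ s, gradedCoh 𝒜 d (ι s)) :=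
    @DirectSum.instAddCommGroup S (fun s => gradedCoh 𝒜 d (ι s)) (fun s => inferInstance)
  set D : A →ₗ[ℝ] A := d + mulLeft ℝ h with hDdef
  have hD : ∀ x, D x = d x + h * x := fun x => rfl
  have hD' : ∀ x, D x = d x + h * projL 𝒜 0 x := by
    intro x; rw [hD, ← mul_projL_zero 𝒜 n hbdd h hh]
  -- range d ≤ range D
  have hrange_d : LinearMap.range d ≤ LinearMap.range D := by
    rintro _ ⟨u, rfl⟩
    have h1 : D u ∈ LinearMap.range D := ⟨u, rfl⟩
    have h2 : h * projL 𝒜 0 u ∈ LinearMap.range D :=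
      htop _ (mul_projL_mem 𝒜 n h hh u)
    have := Submodule.sub_mem _ h1 h2
    rwa [hD' u, add_sub_cancel_right] at this
  -- for x in the kernel, d x = 0
  have hdx0 : ∀ x ∈ P, D x = 0 → d x = 0 := by
    intro x hxP hxD
    have h0 := hker0 x hxP hxD
    have := hD' x
    rw [hxD, h0, mul_zero, add_zero] at this
    exact this.symm
  have hdproj : ∀ x ∈ P, D x = 0 → ∀ k : ℤ, d (projL 𝒜 k x) = 0 := by
    intro x hxP hxD k
    have := projL_d 𝒜 d hd_deg (k + 1) x
    simp only [add_sub_cancel_right] at this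
    rw [← this, hdx0 x hxP hxD, map_zero]
  -- the closed-component maps
  have memφ : ∀ (s : S) (x : ↥(P ⊓ LinearMap.ker D)),
      projL 𝒜 (ι s) (x : A) ∈ 𝒜 (ι s) ⊓ LinearMap.ker d := by
    intro s x
    refine ⟨projL_mem _ _ _, ?_⟩
    exact hdproj _ x.2.1 (LinearMap.mem_ker.mp x.2.2) (ι s)
  let φ : ∀ s : S, ↥(P ⊓ LinearMap.ker D) →ₗ[ℝ] ↥(𝒜 (ι s) ⊓ LinearMap.ker d) := fun s =>
    LinearMap.codRestrict _ ((projL 𝒜 (ι s)) ∘ₗ (P ⊓ LinearMap.ker D).subtype) (memφ s)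
  let Φ₀ : ↥(P ⊓ LinearMap.ker D) →ₗ[ℝ] ⨁ s, gradedCoh 𝒜 d (ι s) :=
    ∑ s : S, (DirectSum.lof ℝ S (fun s => gradedCoh 𝒜 d (ι s)) s) ∘ₗ
      (Submodule.mkQ _) ∘ₗ (φ s)
  -- Φ₀ kills the image of D
  have hΦ₀ker : (LinearMap.range D).comap (P ⊓ LinearMap.ker D).subtype ≤
      LinearMap.ker Φ₀ := by
    rintro x hx
    obtain ⟨u, hu⟩ := Submodule.mem_comap.mp hx
    rw [LinearMap.mem_ker]
    have hcomp : ∀ s : S, (projL 𝒜 (ι s)) (x : A) ∈ LinearMap.range d := by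
      intro s
      have : (x : A) = d u + h * projL 𝒜 0 u := by rw [← hD' u, hu]; rfl
      rw [this, map_add, projL_of_mem_ne 𝒜 (mul_projL_mem 𝒜 n h hh u)
        (by have := hub s; omega), add_zero, projL_d 𝒜 d hd_deg (ι s) u]
      exact ⟨projL 𝒜 (ι s - 1) u, rfl⟩
    simp only [Φ₀, LinearMap.sum_apply, LinearMap.comp_apply]
    refine Finset.sum_eq_zero fun s _ => ?_
    have : Submodule.mkQ ((LinearMap.range d).comap
        (𝒜 (ι s) ⊓ LinearMap.ker d).subtype) (φ s x) = 0 := by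
      rw [Submodule.mkQ_apply, Submodule.Quotient.mk_eq_zero]
      exact Submodule.mem_comap.mpr (hcomp s)
    rw [this, map_zero]
  let Φ : cohQuot D P →ₗ[ℝ] ⨁ s, gradedCoh 𝒜 d (ι s) :=
    Submodule.liftQ _ Φ₀ hΦ₀ker
  -- the inverse components
  have memψ : ∀ (s : S) (z : ↥(𝒜 (ι s) ⊓ LinearMap.ker d)),
      (z : A) ∈ P ⊓ LinearMap.ker D := by
    intro s z
    refine ⟨hmem s z.2.1, LinearMap.mem_ker.mpr ?_⟩
    rw [hD', projL_of_mem_ne 𝒜 z.2.1 (by have := hlb s; omega), mul_zero, add_zero]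
    exact LinearMap.mem_ker.mp z.2.2
  let ψ₀ : ∀ s : S, ↥(𝒜 (ι s) ⊓ LinearMap.ker d) →ₗ[ℝ] ↥(P ⊓ LinearMap.ker D) := fun s =>
    LinearMap.codRestrict _ ((𝒜 (ι s) ⊓ LinearMap.ker d).subtype) (memψ s)
  have hψker : ∀ s : S, (LinearMap.range d).comap (𝒜 (ι s) ⊓ LinearMap.ker d).subtype ≤
      LinearMap.ker ((Submodule.mkQ ((LinearMap.range D).comap
        (P ⊓ LinearMap.ker D).subtype)) ∘ₗ (ψ₀ s)) := by
    intro s z hz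
    rw [LinearMap.mem_ker, LinearMap.comp_apply, Submodule.mkQ_apply,
      Submodule.Quotient.mk_eq_zero]
    exact Submodule.mem_comap.mpr (hrange_d (Submodule.mem_comap.mp hz))
  let ψ : ∀ s : S, gradedCoh 𝒜 d (ι s) →ₗ[ℝ] cohQuot D P := fun s =>
    Submodule.liftQ _ ((Submodule.mkQ ((LinearMap.range D).comap
      (P ⊓ LinearMap.ker D).subtype)) ∘ₗ (ψ₀ s)) (hψker s)
  let Ψ : (⨁ s, gradedCoh 𝒜 d (ι s)) →ₗ[ℝ] cohQuot D P :=
    DirectSum.toModule ℝ S _ ψ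
  -- Φ ∘ Ψ = id
  have hΦΨ : Φ ∘ₗ Ψ = LinearMap.id := by
    refine DirectSum.linearMap_ext ℝ fun s => ?_
    apply LinearMap.ext
    intro q
    obtain ⟨z, rfl⟩ := Submodule.mkQ_surjective _ q
    simp only [LinearMap.comp_apply, LinearMap.id_apply, Ψ, DirectSum.toModule_lof]
    rw [show (ψ s) (Submodule.mkQ _ z) = Submodule.mkQ _ (ψ₀ s z) from
      Submodule.liftQ_apply _ _ z]
    rw [show Φ (Submodule.mkQ _ (ψ₀ s z)) = Φ₀ (ψ₀ s z) from
      Submodule.liftQ_apply _ _ _]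
    simp only [Φ₀, LinearMap.sum_apply, LinearMap.comp_apply]
    rw [Finset.sum_eq_single_of_mem s (Finset.mem_univ s)]
    · congr 1
      rw [Submodule.mkQ_apply]
      congr 1
      apply Subtype.ext
      exact projL_of_mem_same 𝒜 z.2.1
    · intro t _ hts
      have : φ t (ψ₀ s z) = 0 := by
        apply Subtype.ext
        exact projL_of_mem_ne 𝒜 z.2.1 (fun hc => hts (hι hc).symm)
      rw [this, map_zero, map_zero]
  -- Ψ ∘ Φ = id
  have hresid : ∀ x : A, x ∈ P → D x = 0 →
      x - ∑ s : S, projL 𝒜 (ι s) x ∈ LinearMap.range D := by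
    intro x hxP hxD
    set T : Finset ℤ := DFinsupp.support (DirectSum.decompose 𝒜 x) with hT
    set E : Finset ℤ := Finset.image ι Finset.univ with hE
    have hxsum : ∑ i ∈ T ∪ E, projL 𝒜 i x = x := by
      have h1 : ∑ i ∈ T, projL 𝒜 i x = x := DirectSum.sum_support_decompose 𝒜 x
      conv_rhs => rw [← h1]
      refine (Finset.sum_subset Finset.subset_union_left ?_).symm
      intro i _ hi
      rw [projL_apply]
      rw [DFinsupp.notMem_support_iff.mp hi]
      rfl
    have hEsum : ∑ i ∈ E, projL 𝒜 i x = ∑ s : S, projL 𝒜 (ι s) x :=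
      Finset.sum_image (fun a _ b _ hab => hι hab)
    have hsd : ∑ i ∈ (T ∪ E) \ E, projL 𝒜 i x = x - ∑ i ∈ E, projL 𝒜 i x := by
      rw [eq_sub_iff_add_eq, Finset.sum_sdiff Finset.subset_union_right, hxsum]
    rw [← hEsum, ← hsd]
    refine Submodule.sum_mem _ fun i hi => ?_
    have hiE : i ∉ E := (Finset.mem_sdiff.mp hi).2
    exact hcover x hxP hxD i fun s hc => hiE (hE ▸ Finset.mem_image.mpr ⟨s, Finset.mem_univ s, hc⟩)
  have hΨΦ : Ψ ∘ₗ Φ = LinearMap.id := by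
    apply LinearMap.ext
    intro q
    obtain ⟨x, rfl⟩ := Submodule.mkQ_surjective _ q
    rw [LinearMap.comp_apply, LinearMap.id_apply,
      show Φ (Submodule.mkQ _ x) = Φ₀ x from Submodule.liftQ_apply _ _ _]
    simp only [Φ₀, LinearMap.sum_apply, LinearMap.comp_apply, map_sum]
    have hterm : ∀ s : S, Ψ ((DirectSum.lof ℝ S (fun s => gradedCoh 𝒜 d (ι s)) s)
        (Submodule.mkQ _ (φ s x))) = Submodule.mkQ _ (ψ₀ s (φ s x)) := by
      intro s
      rw [show Ψ ((DirectSum.lof ℝ S (fun s => gradedCoh 𝒜 d (ι s)) s)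
          (Submodule.mkQ _ (φ s x))) = ψ s (Submodule.mkQ _ (φ s x)) from
        DirectSum.toModule_lof ℝ s _]
      exact Submodule.liftQ_apply _ _ _
    rw [Finset.sum_congr rfl fun s _ => hterm s, ← map_sum]
    rw [Submodule.mkQ_apply, Submodule.mkQ_apply, Submodule.Quotient.eq]
    refine Submodule.mem_comap.mpr ?_
    have hcoe : ((∑ s : S, ψ₀ s (φ s x) - x : ↥(P ⊓ LinearMap.ker D)) : A)
        = (∑ s : S, projL 𝒜 (ι s) (x : A)) - (x : A) := by
      push_cast
      congr 1
    rw [show (P ⊓ LinearMap.ker D).subtype (∑ s : S, ψ₀ s (φ s x) - x) =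
      ((∑ s : S, ψ₀ s (φ s x) - x : ↥(P ⊓ LinearMap.ker D)) : A) from rfl, hcoe]
    have := hresid (x : A) x.2.1 (LinearMap.mem_ker.mp x.2.2)
    have h2 := Submodule.neg_mem _ this
    rwa [neg_sub] at h2
  exact ⟨LinearEquiv.ofLinear Φ Ψ hΦΨ hΨΦ⟩

end AuxIso


/-- Let `n ≥ 3` be odd and `A` a graded-commutative DGA over `ℝ` with
`𝒜 k = ⊥` for `k < 0` and `k > n`.  Let `h ∈ 𝒜 n` (automatically `d`-closed), and suppose
that the map `H⁰(A,d) → Hⁿ(A,d)`, `[λ] ↦ [h·λ]`, is a bijection (expressed element-wise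
below).  Then the even twisted cohomology `H⁺(A, d_h)` is isomorphic to
`⊕_{k even, 2 ≤ k ≤ n−1} Hᵏ(A,d)`, the odd twisted cohomology `H⁻(A, d_h)` is isomorphic to
`⊕_{k odd, 1 ≤ k ≤ n−2} Hᵏ(A,d)`, and in particular
`H(A, d_h) ≅ ⊕_{k=1}^{n−1} Hᵏ(A,d)`. -/
theorem twisted_cohomology_of_top_degree_flux
    {A : Type*} [Ring A] [Algebra ℝ A]
    (𝒜 : ℤ → Submodule ℝ A) [GradedAlgebra 𝒜]
    (gcomm : ∀ (i j : ℤ), ∀ x ∈ 𝒜 i, ∀ y ∈ 𝒜 j,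
      x * y = ((-1 : ℝ) ^ (i * j)) • (y * x))
    (d : A →ₗ[ℝ] A)
    (hd_deg : ∀ k : ℤ, Submodule.map d (𝒜 k) ≤ 𝒜 (k + 1))
    (hd2 : d ∘ₗ d = 0)
    (leibniz : ∀ (i j : ℤ), ∀ x ∈ 𝒜 i, ∀ y ∈ 𝒜 j,
      d (x * y) = d x * y + ((-1 : ℝ) ^ i) • (x * d y))
    (n : ℕ) (hn3 : 3 ≤ n) (hnodd : Odd n)
    (hbdd : ∀ k : ℤ, (k < 0 ∨ (n : ℤ) < k) → 𝒜 k = ⊥)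
    (h : A) (hh : h ∈ 𝒜 (n : ℤ))
    -- surjectivity of `[λ] ↦ [h·λ] : H⁰(A,d) → Hⁿ(A,d)` (every `z ∈ 𝒜 n` is closed)
    (hsurj : ∀ z ∈ 𝒜 (n : ℤ), ∃ lam, lam ∈ 𝒜 0 ∧ d lam = 0 ∧
      z - h * lam ∈ LinearMap.range d)
    -- injectivity of `[λ] ↦ [h·λ] : H⁰(A,d) → Hⁿ(A,d)`
    (hinj : ∀ lam, lam ∈ 𝒜 0 → d lam = 0 → h * lam ∈ LinearMap.range d →
      lam ∈ LinearMap.range d) :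
    -- `H⁺(A, d_h) ≅ ⊕_{k even, 2 ≤ k ≤ n−1} Hᵏ(A, d)`
    Nonempty (cohQuot (d + mulLeft ℝ h) (⨆ k : ℤ, 𝒜 (2 * k)) ≃ₗ[ℝ]
      ⨁ k : {k : ℤ // Even k ∧ 2 ≤ k ∧ k ≤ (n : ℤ) - 1}, gradedCoh 𝒜 d k.val) ∧
    -- `H⁻(A, d_h) ≅ ⊕_{k odd, 1 ≤ k ≤ n−2} Hᵏ(A, d)`
    Nonempty (cohQuot (d + mulLeft ℝ h) (⨆ k : ℤ, 𝒜 (2 * k + 1)) ≃ₗ[ℝ]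
      ⨁ k : {k : ℤ // Odd k ∧ 1 ≤ k ∧ k ≤ (n : ℤ) - 2}, gradedCoh 𝒜 d k.val) ∧
    -- in particular `H(A, d_h) ≅ ⊕_{k=1}^{n−1} Hᵏ(A, d)`
    Nonempty ((cohQuot (d + mulLeft ℝ h) (⨆ k : ℤ, 𝒜 (2 * k)) ×
        cohQuot (d + mulLeft ℝ h) (⨆ k : ℤ, 𝒜 (2 * k + 1))) ≃ₗ[ℝ]
      ⨁ k : {k : ℤ // 1 ≤ k ∧ k ≤ (n : ℤ) - 1}, gradedCoh 𝒜 d k.val) := by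
  classical
  obtain ⟨m, hm⟩ := hnodd
  have hmz : (n : ℤ) = 2 * (m : ℤ) + 1 := by exact_mod_cast hm
  set D : A →ₗ[ℝ] A := d + mulLeft ℝ h with hDdef
  have hD' : ∀ x, D x = d x + h * projL 𝒜 0 x := by
    intro x
    show d x + h * x = _
    rw [← mul_projL_zero 𝒜 n hbdd h hh]
  -- every element of the top graded piece is twisted-exact
  have htop : ∀ z ∈ 𝒜 (n : ℤ), z ∈ LinearMap.range D := by
    intro z hz
    obtain ⟨lam, hlam0, hdlam, u, hu⟩ := hsurj z hz
    refine ⟨lam + projL 𝒜 ((n : ℤ) - 1) u, ?_⟩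
    have hd1 : d (projL 𝒜 ((n : ℤ) - 1) u) = projL 𝒜 (n : ℤ) (d u) :=
      (projL_d 𝒜 d hd_deg (n : ℤ) u).symm
    have hhl : h * lam ∈ 𝒜 (n : ℤ) := by
      simpa using SetLike.mul_mem_graded hh hlam0
    have hz' : z - h * lam ∈ 𝒜 (n : ℤ) := Submodule.sub_mem _ hz hhl
    have hproj0 : projL 𝒜 0 (lam + projL 𝒜 ((n : ℤ) - 1) u) = lam := by
      rw [map_add, projL_of_mem_same 𝒜 hlam0,
        projL_of_mem_ne 𝒜 (projL_mem 𝒜 _ u) (by omega), add_zero]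
    rw [hD', hproj0, map_add, hdlam, zero_add, hd1, hu,
      projL_of_mem_same 𝒜 hz', sub_add_cancel]
  -- parity lemmas
  have hparE : ∀ x ∈ (⨆ k : ℤ, 𝒜 (2 * k)), ∀ j : ℤ, ¬ Even j → projL 𝒜 j x = 0 := by
    intro x hx
    refine Submodule.iSup_induction (fun k : ℤ => 𝒜 (2 * k))
      (motive := fun y => ∀ j : ℤ, ¬ Even j → projL 𝒜 j y = 0) hx ?_ ?_ ?_
    · intro i y hy j hj
      exact projL_of_mem_ne 𝒜 hy (fun hc => hj ⟨i, by omega⟩)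
    · intro j _; exact map_zero _
    · intro a b ha hb j hj; rw [map_add, ha j hj, hb j hj, add_zero]
  have hparO : ∀ x ∈ (⨆ k : ℤ, 𝒜 (2 * k + 1)), ∀ j : ℤ, Even j → projL 𝒜 j x = 0 := by
    intro x hx
    refine Submodule.iSup_induction (fun k : ℤ => 𝒜 (2 * k + 1))
      (motive := fun y => ∀ j : ℤ, Even j → projL 𝒜 j y = 0) hx ?_ ?_ ?_
    · intro i y hy j hj
      obtain ⟨r, hr⟩ := hj
      exact projL_of_mem_ne 𝒜 hy (by omega)
    · intro j _; exact map_zero _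
    · intro a b ha hb j hj; rw [map_add, ha j hj, hb j hj, add_zero]
  -- degree-0 component of a twisted cocycle vanishes
  have hker0E : ∀ x : A, D x = 0 → projL 𝒜 0 x = 0 := by
    intro x hxD
    have hx₀m : projL 𝒜 0 x ∈ 𝒜 0 := projL_mem 𝒜 0 x
    have hdx : d x = - (h * projL 𝒜 0 x) := by
      have h1 := hD' x
      rw [hxD] at h1
      exact eq_neg_of_add_eq_zero_left h1.symm
    have hdx₀ : d (projL 𝒜 0 x) = 0 := by
      have h1 : projL 𝒜 1 (d x) = d (projL 𝒜 0 x) := by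
        simpa using projL_d 𝒜 d hd_deg 1 x
      rw [← h1, hdx, map_neg,
        projL_of_mem_ne 𝒜 (mul_projL_mem 𝒜 n h hh x) (by omega), neg_zero]
    have hhx₀ : h * projL 𝒜 0 x ∈ LinearMap.range d :=
      ⟨-x, by rw [map_neg, hdx, neg_neg]⟩
    obtain ⟨u, hu⟩ := hinj _ hx₀m hdx₀ hhx₀
    have h2 : projL 𝒜 0 x = d (projL 𝒜 (0 - 1 : ℤ) u) := by
      conv_lhs => rw [← projL_of_mem_same 𝒜 hx₀m, ← hu]
      exact projL_d 𝒜 d hd_deg 0 u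
    have hmneg : projL 𝒜 (0 - 1 : ℤ) u = 0 := by
      have hmm := projL_mem 𝒜 (0 - 1 : ℤ) u
      rw [hbdd (0 - 1 : ℤ) (Or.inl (by omega))] at hmm
      exact (Submodule.mem_bot ℝ).mp hmm
    rw [h2, hmneg, map_zero]
  -- Fintype instances
  haveI fE : Fintype {k : ℤ // Even k ∧ 2 ≤ k ∧ k ≤ (n : ℤ) - 1} :=
    Fintype.subtype ((Finset.Icc (2 : ℤ) ((n : ℤ) - 1)).filter (fun k => Even k))
      (by intro k; simp only [Finset.mem_filter, Finset.mem_Icc]; tauto)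
  haveI fO : Fintype {k : ℤ // Odd k ∧ 1 ≤ k ∧ k ≤ (n : ℤ) - 2} :=
    Fintype.subtype ((Finset.Icc (1 : ℤ) ((n : ℤ) - 2)).filter (fun k => Odd k))
      (by intro k; simp only [Finset.mem_filter, Finset.mem_Icc]; tauto)
  haveI fI : Fintype {k : ℤ // 1 ≤ k ∧ k ≤ (n : ℤ) - 1} :=
    Fintype.subtype (Finset.Icc (1 : ℤ) ((n : ℤ) - 1))
      (by intro k; simp only [Finset.mem_Icc])
  -- the even isomorphism
  have hEiso : Nonempty (cohQuot D (⨆ k : ℤ, 𝒜 (2 * k)) ≃ₗ[ℝ]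
      ⨁ k : {k : ℤ // Even k ∧ 2 ≤ k ∧ k ≤ (n : ℤ) - 1}, gradedCoh 𝒜 d k.val) := by
    refine auxIso 𝒜 d hd_deg n hbdd h hh htop _ _ Subtype.val_injective
      ?_ ?_ _ ?_ ?_ ?_
    · intro s; have := s.2.2.1; omega
    · intro s; have := s.2.2.2; omega
    · rintro ⟨k, ⟨r, hr⟩, hk2⟩
      have hkk : 𝒜 k = 𝒜 (2 * r) := by rw [show k = 2 * r by omega]
      exact hkk ▸ le_iSup (fun j : ℤ => 𝒜 (2 * j)) r
    · intro x _ hxD; exact hker0E x hxD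
    · intro x hxP hxD j hj
      by_cases hev : Even j
      · by_cases hj0 : j = 0
        · rw [hj0, hker0E x hxD]; exact zero_mem _
        · by_cases hbig : j < 0 ∨ (n : ℤ) < j
          · have hmm := projL_mem 𝒜 j x
            rw [hbdd j hbig] at hmm
            rw [(Submodule.mem_bot ℝ).mp hmm]; exact zero_mem _
          · exfalso
            push_neg at hbig
            obtain ⟨r, hr⟩ := hev
            exact hj ⟨j, ⟨r, hr⟩, by omega, by omega⟩ rfl
      · rw [hparE x hxP j hev]; exact zero_mem _
  -- the odd isomorphism
  have hOiso : Nonempty (cohQuot D (⨆ k : ℤ, 𝒜 (2 * k + 1)) ≃ₗ[ℝ]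
      ⨁ k : {k : ℤ // Odd k ∧ 1 ≤ k ∧ k ≤ (n : ℤ) - 2}, gradedCoh 𝒜 d k.val) := by
    refine auxIso 𝒜 d hd_deg n hbdd h hh htop _ _ Subtype.val_injective
      ?_ ?_ _ ?_ ?_ ?_
    · intro s; exact s.2.2.1
    · intro s; have := s.2.2.2; omega
    · rintro ⟨k, ⟨r, hr⟩, hk2⟩
      have hkk : 𝒜 k = 𝒜 (2 * r + 1) := by rw [show k = 2 * r + 1 by omega]
      exact hkk ▸ le_iSup (fun j : ℤ => 𝒜 (2 * j + 1)) r
    · intro x hxP _; exact hparO x hxP 0 Even.zero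
    · intro x hxP hxD j hj
      by_cases hev : Even j
      · rw [hparO x hxP j hev]; exact zero_mem _
      · by_cases hjn : j = (n : ℤ)
        · rw [hjn]; exact htop _ (projL_mem 𝒜 _ x)
        · by_cases hbig : j < 0 ∨ (n : ℤ) < j
          · have hmm := projL_mem 𝒜 j x
            rw [hbdd j hbig] at hmm
            rw [(Submodule.mem_bot ℝ).mp hmm]; exact zero_mem _
          · exfalso
            push_neg at hbig
            obtain ⟨r, hr⟩ := Int.not_even_iff_odd.mp hev
            exact hj ⟨j, ⟨r, hr⟩, by omega, by omega⟩ rfl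
  obtain ⟨eE⟩ := hEiso
  obtain ⟨eO⟩ := hOiso
  refine ⟨⟨eE⟩, ⟨eO⟩, ⟨?_⟩⟩
  -- the combination
  let e : {k : ℤ // Even k ∧ 2 ≤ k ∧ k ≤ (n : ℤ) - 1} ⊕
      {k : ℤ // Odd k ∧ 1 ≤ k ∧ k ≤ (n : ℤ) - 2} ≃
      {k : ℤ // 1 ≤ k ∧ k ≤ (n : ℤ) - 1} :=
    { toFun := Sum.elim (fun a => ⟨a.1, by have := a.2.2; omega⟩)
        (fun b => ⟨b.1, b.2.2.1, by have := b.2.2.2; omega⟩)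
      invFun := fun k =>
        if hk : Even k.1 then
          Sum.inl ⟨k.1, hk, by obtain ⟨r, hr⟩ := hk; have := k.2.1; omega, k.2.2⟩
        else
          Sum.inr ⟨k.1, Int.not_even_iff_odd.mp hk, k.2.1,
            by obtain ⟨r, hr⟩ := Int.not_even_iff_odd.mp hk; have := k.2.2; omega⟩
      left_inv := by
        rintro (a | b)
        · dsimp only [Sum.elim_inl]
          split
          · rfl
          · next hk => exact absurd a.2.1 hk
        · dsimp only [Sum.elim_inr]
          split
          · next hk => exact absurd hk (Int.not_even_iff_odd.mpr b.2.1)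
          · rfl
      right_inv := by
        intro k
        dsimp only
        split <;> rfl }
  let C : {k : ℤ // 1 ≤ k ∧ k ≤ (n : ℤ) - 1} → Type _ := fun k => gradedCoh 𝒜 d k.val
  let E3 : (∀ i, C (e i)) ≃ₗ[ℝ] (∀ k, C k) := LinearEquiv.piCongrLeft ℝ C e
  let E2 : ((∀ a, C (e (Sum.inl a))) × (∀ b, C (e (Sum.inr b)))) ≃ₗ[ℝ] (∀ i, C (e i)) :=
    (sumPiLequivProdPi ℝ (fun i => C (e i))).symm
  let E1 : ((⨁ k : {k : ℤ // Even k ∧ 2 ≤ k ∧ k ≤ (n : ℤ) - 1}, gradedCoh 𝒜 d k.val) ×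
      (⨁ k : {k : ℤ // Odd k ∧ 1 ≤ k ∧ k ≤ (n : ℤ) - 2}, gradedCoh 𝒜 d k.val)) ≃ₗ[ℝ]
      ((∀ a, C (e (Sum.inl a))) × (∀ b, C (e (Sum.inr b)))) :=
    LinearEquiv.prodCongr (DirectSum.linearEquivFunOnFintype ℝ _ _)
      (DirectSum.linearEquivFunOnFintype ℝ _ _)
  exact (LinearEquiv.prodCongr eE eO).trans (E1.trans (E2.trans
    (E3.trans ((DirectSum.linearEquivFunOnFintype ℝ _ _).symm))))
end
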